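/- Let 0 < ε ≤ 1, let r be a unit vector in the Euclidean plane, and let s, u, q be points with angle(u − s, r) ≤ ε/16, angle(q − s, r) ≤ ε/16, and ⟪r, u − s⟫ ≤ ⟪r, q − s⟫ (u and q lie in the cone with apex s, axis r, and opening angle ε/8, and u has cone distance at most that of q). Then dist(u, q) ≤ dist(s, q). -/

import Mathlib

open Real EuclideanGeometry RealInnerProductSpace

private lemma real_aux (na nb A B P c sn : ℝ) (hna0 : 0 < na) (hc : 0 < c)
    (hs : 0 ≤ sn) (hs2 : sn ≤ 1/16) (hcs : c ^ 2 + sn ^ 2 = 1)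
    (hA : c * na ≤ A) (hB : c * nb ≤ B) (hAB : A ≤ B)
    (hAle : A ≤ na) (hBle : B ≤ nb)
    (hCS : (P - A * B) * (P - A * B) ≤ (na ^ 2 - A ^ 2) * (nb ^ 2 - B ^ 2)) :
    na ^ 2 ≤ 2 * P := by
  have hApos : 0 < A := lt_of_lt_of_le (by positivity) hA
  have hBpos : 0 < B := lt_of_lt_of_le hApos hAB
  have hnb0 : 0 < nb := lt_of_lt_of_le hBpos hBle
  have hA2 : (c * na) ^ 2 ≤ A ^ 2 := by
    have := pow_le_pow_left₀ (by positivity : (0:ℝ) ≤ c * na) hA 2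
    linarith
  have hB2 : (c * nb) ^ 2 ≤ B ^ 2 := by
    have := pow_le_pow_left₀ (by positivity : (0:ℝ) ≤ c * nb) hB 2
    linarith
  have hperpA : na ^ 2 - A ^ 2 ≤ sn ^ 2 * na ^ 2 := by nlinarith
  have hperpB : nb ^ 2 - B ^ 2 ≤ sn ^ 2 * nb ^ 2 := by nlinarith
  have hperpA0 : 0 ≤ na ^ 2 - A ^ 2 := by nlinarith
  have hperpB0 : 0 ≤ nb ^ 2 - B ^ 2 := by nlinarith
  have hprod : (na ^ 2 - A ^ 2) * (nb ^ 2 - B ^ 2) ≤ (sn ^ 2 * na ^ 2) * (sn ^ 2 * nb ^ 2) :=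
    mul_le_mul hperpA hperpB hperpB0 (by positivity)
  have hsn0 : (0:ℝ) ≤ sn ^ 2 * na * nb := by positivity
  have hD2 : (P - A * B) ^ 2 ≤ (sn ^ 2 * na * nb) ^ 2 := by
    calc (P - A * B) ^ 2 = (P - A * B) * (P - A * B) := sq (P - A * B)
      _ ≤ (na ^ 2 - A ^ 2) * (nb ^ 2 - B ^ 2) := hCS
      _ ≤ (sn ^ 2 * na ^ 2) * (sn ^ 2 * nb ^ 2) := hprod
      _ = (sn ^ 2 * na * nb) ^ 2 := by ring
  have hPQ : -(sn ^ 2 * na * nb) ≤ P - A * B := (abs_le_of_sq_le_sq' hD2 hsn0).1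
  clear hCS hprod hD2
  have h1 : c ^ 2 * na ^ 2 ≤ A * B := by
    calc c ^ 2 * na ^ 2 = (c * na) ^ 2 := by ring
      _ ≤ A ^ 2 := hA2
      _ = A * A := sq A
      _ ≤ A * B := mul_le_mul_of_nonneg_left hAB hApos.le
  have hcc : c * na * (c * nb) ≤ A * B := mul_le_mul hA hB (by positivity) hApos.le
  have h2 : c ^ 2 * (sn ^ 2 * na * nb) ≤ sn ^ 2 * (A * B) := by
    calc c ^ 2 * (sn ^ 2 * na * nb) = sn ^ 2 * (c * na * (c * nb)) := by ring
      _ ≤ sn ^ 2 * (A * B) := mul_le_mul_of_nonneg_left hcc (by positivity)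
  have hc2 : c ^ 2 = 1 - sn ^ 2 := by linarith
  have h4 : (1 + 2 * sn ^ 2) * (A * B) ≤ (2 - 2 * sn ^ 2) * (A * B) := by
    have hsn4 : 0 ≤ 1 - 4 * sn ^ 2 := by nlinarith
    have h40 : 0 ≤ (1 - 4 * sn ^ 2) * (A * B) :=
      mul_nonneg hsn4 (mul_pos hApos hBpos).le
    have e : (2 - 2 * sn ^ 2) * (A * B) - (1 + 2 * sn ^ 2) * (A * B)
        = (1 - 4 * sn ^ 2) * (A * B) := by ring
    linarith
  have h3 : c ^ 2 * (na ^ 2 + 2 * (sn ^ 2 * na * nb)) ≤ c ^ 2 * (2 * (A * B)) := by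
    have e1 : c ^ 2 * (na ^ 2 + 2 * (sn ^ 2 * na * nb))
        = c ^ 2 * na ^ 2 + 2 * (c ^ 2 * (sn ^ 2 * na * nb)) := by ring
    have e2 : c ^ 2 * (2 * (A * B)) = (2 - 2 * sn ^ 2) * (A * B) := by rw [hc2]; ring
    have e3 : (1 + 2 * sn ^ 2) * (A * B) = A * B + 2 * (sn ^ 2 * (A * B)) := by ring
    linarith
  have h5 : na ^ 2 + 2 * (sn ^ 2 * na * nb) ≤ 2 * (A * B) :=
    (mul_le_mul_iff_right₀ (by positivity : (0:ℝ) < c ^ 2)).mp h3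
  linarith [hPQ, h5]

private lemma cone_aux {V : Type*} [NormedAddCommGroup V] [InnerProductSpace ℝ V]
    (r a b : V) (hr : ‖r‖ = 1) (c sn : ℝ) (hc : 0 < c) (hs : 0 ≤ sn) (hs2 : sn ≤ 1/16)
    (hcs : c ^ 2 + sn ^ 2 = 1)
    (hA : c * ‖a‖ ≤ ⟪a, r⟫) (hB : c * ‖b‖ ≤ ⟪b, r⟫)
    (hAB : ⟪a, r⟫ ≤ ⟪b, r⟫) : ‖a - b‖ ≤ ‖b‖ := by
  by_cases haz : a = 0
  · simp [haz]
  have hna0 : 0 < ‖a‖ := norm_pos_iff.mpr haz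
  have hAle : ⟪a, r⟫ ≤ ‖a‖ := by
    have := real_inner_le_norm a r; rwa [hr, mul_one] at this
  have hBle : ⟪b, r⟫ ≤ ‖b‖ := by
    have := real_inner_le_norm b r; rwa [hr, mul_one] at this
  have hr2 : ⟪r, r⟫ = (1:ℝ) := by
    rw [real_inner_self_eq_norm_sq, hr]; norm_num
  have hra : ⟪r, a⟫ = ⟪a, r⟫ := real_inner_comm a r
  have hrb : ⟪r, b⟫ = ⟪b, r⟫ := real_inner_comm b r
  set ap : V := a - ⟪a, r⟫ • r with hap
  set bp : V := b - ⟪b, r⟫ • r with hbp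
  have hapr : ⟪ap, r⟫ = 0 := by
    rw [hap, inner_sub_left, real_inner_smul_left, hr2, mul_one, sub_self]
  have hapnorm : ⟪ap, ap⟫ = ‖a‖ ^ 2 - ⟪a, r⟫ ^ 2 := by
    rw [hap, inner_sub_right, real_inner_smul_right, inner_sub_left, inner_sub_left,
      real_inner_smul_left, real_inner_smul_left, hr2, hra, real_inner_self_eq_norm_sq]
    ring
  have hbpnorm : ⟪bp, bp⟫ = ‖b‖ ^ 2 - ⟪b, r⟫ ^ 2 := by
    rw [hbp, inner_sub_right, real_inner_smul_right, inner_sub_left, inner_sub_left,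
      real_inner_smul_left, real_inner_smul_left, hr2, hrb, real_inner_self_eq_norm_sq]
    ring
  have hinner : ⟪ap, bp⟫ = ⟪a, b⟫ - ⟪a, r⟫ * ⟪b, r⟫ := by
    rw [hbp, inner_sub_right, real_inner_smul_right, hap, inner_sub_left,
      real_inner_smul_left, hrb, inner_sub_left, real_inner_smul_left, hr2]
    ring
  have hCS : (⟪a, b⟫ - ⟪a, r⟫ * ⟪b, r⟫) * (⟪a, b⟫ - ⟪a, r⟫ * ⟪b, r⟫)
      ≤ (‖a‖ ^ 2 - ⟪a, r⟫ ^ 2) * (‖b‖ ^ 2 - ⟪b, r⟫ ^ 2) := by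
    have := real_inner_mul_inner_self_le ap bp
    rwa [hapnorm, hbpnorm, hinner] at this
  have hkey : ‖a‖ ^ 2 ≤ 2 * ⟪a, b⟫ :=
    real_aux ‖a‖ ‖b‖ ⟪a, r⟫ ⟪b, r⟫ ⟪a, b⟫ c sn hna0 hc hs hs2 hcs hA hB hAB hAle hBle hCS
  have hsqle : ‖a - b‖ ^ 2 ≤ ‖b‖ ^ 2 := by
    rw [norm_sub_sq_real]; linarith
  nlinarith [hsqle, norm_nonneg (a - b), norm_nonneg b]

/-- Conclusion (1) of the paper's Lemma 3 in the obstacle-free Euclidean case: if `u` and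
`q` lie in the cone with apex `s`, axis `r` and opening angle `ε/8` (half-angle `ε/16`),
and `u` has cone distance at most that of `q`, then `dist u q ≤ dist s q`. -/
theorem dist_u_q_le_dist_s_q
    (ε : ℝ) (hε0 : 0 < ε) (hε1 : ε ≤ 1)
    (r : EuclideanSpace ℝ (Fin 2)) (hr : ‖r‖ = 1)
    (s u q : EuclideanSpace ℝ (Fin 2))
    (hu : InnerProductGeometry.angle (u - s) r ≤ ε / 16)
    (hq : InnerProductGeometry.angle (q - s) r ≤ ε / 16)
    (hle : ⟪r, u - s⟫ ≤ ⟪r, q - s⟫) :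
    dist u q ≤ dist s q := by
  have hdistuq : dist u q = ‖(u - s) - (q - s)‖ := by
    rw [dist_eq_norm]; congr 1; abel
  have hdistsq : dist s q = ‖q - s‖ := by rw [dist_eq_norm']
  rw [hdistuq, hdistsq]
  have hε16 : 0 < ε / 16 := by linarith
  have hεpi : ε / 16 ≤ π := by have := Real.pi_gt_three; linarith
  have hcpos : 0 < Real.cos (ε / 16) := by
    apply Real.cos_pos_of_mem_Ioo
    constructor <;> · have := Real.pi_gt_three; linarith
  have hsin : Real.sin (ε / 16) ≤ 1 / 16 := by
    have := Real.sin_le hε16.le; linarith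
  have hsin0 : 0 ≤ Real.sin (ε / 16) := Real.sin_nonneg_of_nonneg_of_le_pi hε16.le hεpi
  have hcs : Real.cos (ε / 16) ^ 2 + Real.sin (ε / 16) ^ 2 = 1 := by
    have := Real.sin_sq_add_cos_sq (ε / 16); linarith
  have key : ∀ v : EuclideanSpace ℝ (Fin 2),
      InnerProductGeometry.angle v r ≤ ε / 16 → Real.cos (ε / 16) * ‖v‖ ≤ ⟪v, r⟫ := by
    intro v hv
    by_cases hvz : v = 0
    · simp [hvz]
    have hnv : 0 < ‖v‖ := norm_pos_iff.mpr hvz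
    have hcos : Real.cos (ε / 16) ≤ Real.cos (InnerProductGeometry.angle v r) :=
      Real.cos_le_cos_of_nonneg_of_le_pi (InnerProductGeometry.angle_nonneg v r) hεpi hv
    rw [InnerProductGeometry.cos_angle, hr, mul_one] at hcos
    calc Real.cos (ε / 16) * ‖v‖ ≤ (⟪v, r⟫ / ‖v‖) * ‖v‖ :=
          mul_le_mul_of_nonneg_right hcos hnv.le
      _ = ⟪v, r⟫ := by field_simp
  exact cone_aux r (u - s) (q - s) hr _ _ hcpos hsin0 hsin hcs
    (key _ hu) (key _ hq)
    (by rw [real_inner_comm r (u - s), real_inner_comm r (q - s)]; exact hle)
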